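/- Let G be a D-regular Bonnet-Myers sharp graph of diameter L, x_0 a pole, and y a vertex with d(x_0, y) = k. Then d⁺(y) − d⁻(y) = D(1 − 2k/L), where d⁻(y), d⁺(y) denote the number of neighbors of y at distance k−1, respectively k+1, from x_0. -/

import Mathlib

open Finset

namespace BMS

open scoped Classical

variable {V : Type*}

/-- The uniform probability measure on the closed 1-ball of `x` in a `D`-regular graph. -/
noncomputable def mu (G : SimpleGraph V) (D : ℕ) (x : V) : V → ℝ :=
  fun v => if G.dist x v ≤ 1 then 1 / (D + 1) else 0

/-- The L¹-Wasserstein distance between `μ_x` and `μ_y`, as an infimum over transport plans. -/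
noncomputable def W1 (G : SimpleGraph V) [Fintype V] (D : ℕ) (x y : V) : ℝ :=
  sInf { c : ℝ | ∃ π : V → V → ℝ,
    (∀ u v, 0 ≤ π u v) ∧
    (∀ u, ∑ v, π u v = mu G D x u) ∧
    (∀ v, ∑ u, π u v = mu G D y v) ∧
    c = ∑ u, ∑ v, (G.dist u v : ℝ) * π u v }

/-- Ollivier Ricci curvature (Lin–Lu–Yau normalization for regular graphs). -/
noncomputable def kappa (G : SimpleGraph V) [Fintype V] (D : ℕ) (x y : V) : ℝ :=
  ((D + 1) / D) * (1 - W1 G D x y)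

/-- `G` is Bonnet–Myers sharp: the infimum of the curvature over edges equals `2 / L`. -/
def BMSharp (G : SimpleGraph V) [Fintype V] (D L : ℕ) : Prop :=
  sInf { k : ℝ | ∃ x y, G.Adj x y ∧ k = kappa G D x y } = 2 / (L : ℝ)

/-- Number of neighbors of `y` at distance `k` from `x0`. -/
noncomputable def sphDeg (G : SimpleGraph V) [Fintype V] (x0 y : V) (k : ℕ) : ℕ :=
  (Finset.univ.filter (fun v => G.Adj y v ∧ G.dist x0 v = k)).card

/-- Number of triangles containing the edge `x ~ y` (common neighbors of `x` and `y`). -/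
noncomputable def tri (G : SimpleGraph V) [Fintype V] (x y : V) : ℕ :=
  (Finset.univ.filter (fun v => G.Adj x v ∧ G.Adj y v)).card

/-- A good optimal transport map from `B_1(a)` to `B_1(b)`: a bijection between the 1-balls,
fixing exactly the vertices of `B_1(a) ∩ B_1(b)` (among the domain), whose cost realizes
the Wasserstein distance `W1 (μ_a, μ_b)`. -/
def goodMap (G : SimpleGraph V) [Fintype V] (D : ℕ) (a b : V) (T : V → V) : Prop :=
  Set.BijOn T {v | G.dist a v ≤ 1} {v | G.dist b v ≤ 1} ∧
  (∀ v, G.dist a v ≤ 1 → (T v = v ↔ G.dist b v ≤ 1)) ∧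
  (1 / (D + 1 : ℝ)) *
      ∑ v ∈ Finset.univ.filter (fun v => G.dist a v ≤ 1), (G.dist v (T v) : ℝ) =
    W1 G D a b

/-- `Δ_w(z) = d⁺(z) - d⁻(z)` as a real number. -/
noncomputable def delta (G : SimpleGraph V) [Fintype V] (w z : V) : ℝ :=
  (sphDeg G w z (G.dist w z + 1) : ℝ) - (sphDeg G w z (G.dist w z - 1) : ℝ)

section lemmas

variable [Fintype V] {G : SimpleGraph V} (hconn : G.Connected) {D L : ℕ}

lemma dist_le_one_iff (hconn : G.Connected) (z v : V) :
    G.dist z v ≤ 1 ↔ z = v ∨ G.Adj z v := by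
  constructor
  · intro h
    interval_cases hzv : G.dist z v
    · exact Or.inl (hconn.dist_eq_zero_iff.mp hzv)
    · exact Or.inr (SimpleGraph.dist_eq_one_iff_adj.mp hzv)
  · rintro (rfl | h)
    · simp [SimpleGraph.dist_self]
    · rw [SimpleGraph.dist_eq_one_iff_adj.mpr h]

lemma ball_eq (hconn : G.Connected) (z : V) :
    Finset.univ.filter (fun v => G.dist z v ≤ 1) = insert z (G.neighborFinset z) := by
  ext v
  simp [dist_le_one_iff hconn z v, eq_comm]

lemma mu_nonneg (G : SimpleGraph V) (D : ℕ) (z v : V) : 0 ≤ mu G D z v := by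
  unfold mu; positivity

lemma mu_sum (hconn : G.Connected) (hreg : G.IsRegularOfDegree D) (z : V) :
    ∑ v, mu G D z v = 1 := by
  unfold mu
  rw [← Finset.sum_filter, ball_eq hconn z, Finset.sum_const,
    Finset.card_insert_of_notMem (by simp), SimpleGraph.card_neighborFinset_eq_degree,
    hreg z]
  rw [nsmul_eq_mul]; push_cast
  field_simp

/-- Kantorovich lower bound. -/
lemma kant (hconn : G.Connected) (hreg : G.IsRegularOfDegree D) (x y : V)
    (f : V → ℝ) (hf : ∀ u v, f v - f u ≤ G.dist u v) :
    ∑ v, f v * mu G D y v - ∑ u, f u * mu G D x u ≤ W1 G D x y := by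
  apply le_csInf
  · refine ⟨∑ u, ∑ v, (G.dist u v : ℝ) * (mu G D x u * mu G D y v),
      fun u v => mu G D x u * mu G D y v, ?_, ?_, ?_, rfl⟩
    · exact fun u v => mul_nonneg (mu_nonneg G D x u) (mu_nonneg G D y v)
    · intro u; rw [← Finset.mul_sum, mu_sum hconn hreg y, mul_one]
    · intro v; rw [← Finset.sum_mul, mu_sum hconn hreg x, one_mul]
  · rintro b ⟨π, hpos, hx, hy, rfl⟩
    have key : ∑ u, ∑ v, (f v - f u) * π u v ≤ ∑ u, ∑ v, (G.dist u v : ℝ) * π u v := by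
      refine Finset.sum_le_sum fun u _ => Finset.sum_le_sum fun v _ => ?_
      exact mul_le_mul_of_nonneg_right (hf u v) (hpos u v)
    refine le_trans (le_of_eq ?_) key
    have e1 : ∀ u v, (f v - f u) * π u v = f v * π u v - f u * π u v := fun u v => by ring
    simp only [e1, Finset.sum_sub_distrib]
    congr 1
    · rw [Finset.sum_comm]
      refine Finset.sum_congr rfl fun v _ => ?_
      rw [← Finset.mul_sum, hy v, mul_comm]
    · refine Finset.sum_congr rfl fun u _ => ?_
      rw [← Finset.mul_sum, hx u, mul_comm]

lemma neighbor_sum (hconn : G.Connected) (w z : V) :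
    ∑ v ∈ Finset.univ.filter (fun v => G.Adj z v), ((G.dist w v : ℝ) - (G.dist w z : ℝ))
      = delta G w z := by
  have hpt : ∀ v ∈ Finset.univ.filter (fun v => G.Adj z v),
      (G.dist w v : ℝ) - (G.dist w z : ℝ)
        = (if G.dist w v = G.dist w z + 1 then (1:ℝ) else 0)
          - (if G.dist w v = G.dist w z - 1 then (1:ℝ) else 0) := by
    intro v hv
    rw [Finset.mem_filter] at hv
    have hadj := hv.2
    have hzv : G.dist z v = 1 := SimpleGraph.dist_eq_one_iff_adj.mpr hadj
    have hvz : G.dist v z = 1 := by rw [SimpleGraph.dist_comm]; exact hzv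
    have h1 : G.dist w v ≤ G.dist w z + 1 := by
      have := hconn.dist_triangle (u := w) (v := z) (w := v); omega
    have h2 : G.dist w z ≤ G.dist w v + 1 := by
      have := hconn.dist_triangle (u := w) (v := v) (w := z); omega
    have h3 : G.dist w v = 0 → G.dist w z = 1 := by
      intro h0
      have hwv : w = v := hconn.dist_eq_zero_iff.mp h0
      rw [hwv]; exact hvz
    rcases Nat.lt_trichotomy (G.dist w v) (G.dist w z) with hlt | heq | hgt
    · have he : G.dist w v = G.dist w z - 1 := by omega
      rw [if_neg (by omega), if_pos he]
      have hc : (G.dist w v : ℝ) + 1 = (G.dist w z : ℝ) := by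
        exact_mod_cast congrArg (Nat.cast (R := ℝ)) (by omega : G.dist w v + 1 = G.dist w z)
      linarith
    · have hz1 : G.dist w z ≠ 0 := by
        intro h0
        have : G.dist w v = 0 := by omega
        have := h3 this; omega
      rw [if_neg (by omega), if_neg (by omega), heq]
      ring
    · have he : G.dist w v = G.dist w z + 1 := by omega
      rw [if_pos he, if_neg (by omega)]
      have hc : (G.dist w v : ℝ) = (G.dist w z : ℝ) + 1 := by exact_mod_cast he
      linarith
  rw [Finset.sum_congr rfl hpt, Finset.sum_sub_distrib, Finset.sum_boole, Finset.sum_boole,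
    Finset.filter_filter, Finset.filter_filter]
  rfl

lemma exp_eq (hconn : G.Connected) (hreg : G.IsRegularOfDegree D) (w z : V) :
    ∑ v, (G.dist w v : ℝ) * mu G D z v
      = (G.dist w z : ℝ) + delta G w z / (D + 1) := by
  have hD1pos : (0:ℝ) < (D:ℝ) + 1 := by positivity
  have hN : G.neighborFinset z = Finset.univ.filter (fun v => G.Adj z v) := by
    ext v; simp
  have hcard : ((G.neighborFinset z).card : ℝ) = D := by
    rw [SimpleGraph.card_neighborFinset_eq_degree, hreg z]
  have hS : ∑ v ∈ G.neighborFinset z, (G.dist w v : ℝ)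
      = delta G w z + D * (G.dist w z : ℝ) := by
    have h1 := neighbor_sum hconn w z
    rw [← hN] at h1
    rw [Finset.sum_sub_distrib, Finset.sum_const, nsmul_eq_mul, hcard] at h1
    linarith
  unfold mu
  simp only [mul_ite, mul_zero]
  rw [← Finset.sum_filter, ball_eq hconn z, Finset.sum_insert (by simp),
    ← Finset.sum_mul, hS]
  field_simp
  ring

lemma edge_curv (hD : 0 < D) (hL : 0 < L) (hBM : BMSharp G D L)
    {a b : V} (hadj : G.Adj a b) :
    W1 G D a b ≤ 1 - 2 * D / (L * (D + 1)) := by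
  have hDpos : (0:ℝ) < D := by exact_mod_cast hD
  have hLpos : (0:ℝ) < L := by exact_mod_cast hL
  have hD1pos : (0:ℝ) < D + 1 := by positivity
  have hset : {k : ℝ | ∃ x y, G.Adj x y ∧ k = kappa G D x y}.Finite := by
    apply Set.Finite.subset (Set.finite_range (fun p : V × V => kappa G D p.1 p.2))
    rintro c ⟨x, y, -, rfl⟩
    exact ⟨(x, y), rfl⟩
  have h1 : 2 / (L:ℝ) ≤ kappa G D a b := by
    rw [← hBM]
    exact csInf_le hset.bddBelow ⟨a, b, hadj, rfl⟩
  unfold kappa at h1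
  have h2 := mul_le_mul_of_nonneg_right h1 (le_of_lt (div_pos hDpos hD1pos))
  have e1 : ((D:ℝ) + 1) / D * (1 - W1 G D a b) * (D / (D + 1)) = 1 - W1 G D a b := by
    field_simp
  have e2 : 2 / (L:ℝ) * ((D:ℝ) / (D + 1)) = 2 * D / (L * (D + 1)) := by
    field_simp
  rw [e1, e2] at h2
  linarith

lemma edge_delta (hconn : G.Connected) (hreg : G.IsRegularOfDegree D)
    (hD : 0 < D) (hL : 0 < L) (hBM : BMSharp G D L)
    (w : V) {a b : V} (hadj : G.Adj a b) :
    (G.dist w b : ℝ) - (G.dist w a : ℝ) + (delta G w b - delta G w a) / (D + 1)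
      ≤ 1 - 2 * D / (L * (D + 1)) := by
  have h := kant (D := D) hconn hreg a b (fun v => (G.dist w v : ℝ)) ?_
  · rw [exp_eq hconn hreg w b, exp_eq hconn hreg w a] at h
    have h2 := edge_curv (G := G) hD hL hBM hadj
    have h3 : (delta G w b - delta G w a) / (D + 1)
        = delta G w b / (D + 1) - delta G w a / (D + 1) := sub_div _ _ _
    rw [h3]
    linarith
  · intro u v
    have := hconn.dist_triangle (u := w) (v := u) (w := v)
    have h2 : (G.dist w v : ℝ) ≤ (G.dist w u : ℝ) + (G.dist u v : ℝ) := by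
      exact_mod_cast this
    linarith

lemma exists_pred (hconn : G.Connected) {w v : V} {m : ℕ} (h : G.dist w v = m + 1) :
    ∃ u, G.Adj u v ∧ G.dist w u = m := by
  have hvw : G.dist v w = m + 1 := by rw [SimpleGraph.dist_comm]; exact h
  obtain ⟨q, hq⟩ := (hconn v w).exists_walk_length_eq_dist
  rw [hvw] at hq
  cases q with
  | nil => simp at hq
  | @cons _ u _ hadj q' =>
    refine ⟨u, hadj.symm, ?_⟩
    have h1 : G.dist w u ≤ m := by
      have hd := SimpleGraph.dist_le q'.reverse
      rw [SimpleGraph.Walk.length_reverse] at hd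
      simp only [SimpleGraph.Walk.length_cons] at hq
      omega
    have h2 : m ≤ G.dist w u := by
      have htri : G.dist w v ≤ G.dist w u + G.dist u v := hconn.dist_triangle
      have : G.dist u v = 1 := SimpleGraph.dist_eq_one_iff_adj.mpr hadj.symm
      omega
    omega

lemma delta_self (hconn : G.Connected) (hreg : G.IsRegularOfDegree D) (w : V) :
    delta G w w = D := by
  unfold delta sphDeg
  rw [SimpleGraph.dist_self]
  have e1 : Finset.univ.filter (fun v => G.Adj w v ∧ G.dist w v = 0 + 1)
      = G.neighborFinset w := by
    ext v
    simp only [Finset.mem_filter, Finset.mem_univ, true_and, SimpleGraph.mem_neighborFinset,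
      zero_add, SimpleGraph.dist_eq_one_iff_adj]
    tauto
  have e2 : Finset.univ.filter (fun v => G.Adj w v ∧ G.dist w v = 0 - 1) = ∅ := by
    ext v
    simp only [Finset.mem_filter, Finset.mem_univ, true_and, Finset.notMem_empty, iff_false]
    rintro ⟨hadj, hd⟩
    have : w = v := hconn.dist_eq_zero_iff.mp (by omega)
    subst this
    exact G.loopless.irrefl w hadj
  rw [e1, e2, SimpleGraph.card_neighborFinset_eq_degree, hreg w]
  simp

lemma delta_le (hconn : G.Connected) (hreg : G.IsRegularOfDegree D)
    (hD : 0 < D) (hL : 0 < L) (hBM : BMSharp G D L) (w v : V) :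
    delta G w v ≤ D * (1 - 2 * (G.dist w v : ℝ) / L) := by
  have hDpos : (0:ℝ) < D := by exact_mod_cast hD
  have hLpos : (0:ℝ) < L := by exact_mod_cast hL
  have hD1pos : (0:ℝ) < (D:ℝ) + 1 := by positivity
  suffices H : ∀ (n : ℕ) (v : V), G.dist w v = n → delta G w v ≤ D * (1 - 2 * (n:ℝ) / L) by
    have := H (G.dist w v) v rfl
    exact this
  intro n
  induction n with
  | zero =>
    intro v h0
    have hwv : w = v := hconn.dist_eq_zero_iff.mp h0
    subst hwv
    rw [delta_self hconn hreg]
    simp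
  | succ m ih =>
    intro v h
    obtain ⟨u, hadj, hu⟩ := exists_pred hconn h
    have hedge := edge_delta hconn hreg hD hL hBM w hadj
    rw [h, hu] at hedge
    have hih := ih u hu
    have hstep : delta G w v ≤ delta G w u - 2 * D / L := by
      have hc : ((m + 1 : ℕ) : ℝ) - (m : ℝ) = 1 := by push_cast; ring
      have h2 : (delta G w v - delta G w u) / ((D:ℝ) + 1) ≤ -(2 * D / (L * (D + 1))) := by
        linarith
      have h3 := mul_le_mul_of_nonneg_right h2 (le_of_lt hD1pos)
      rw [div_mul_cancel₀ _ (ne_of_gt hD1pos)] at h3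
      have e : -(2 * (D:ℝ) / ((L:ℝ) * (D + 1))) * ((D:ℝ) + 1) = -(2 * D / L) := by
        field_simp
      rw [e] at h3
      linarith
    have e2 : (D:ℝ) * (1 - 2 * ((m:ℝ) + 1) / L) = D * (1 - 2 * (m:ℝ) / L) - 2 * D / L := by
      field_simp
      ring
    push_cast
    rw [e2]
    linarith

lemma delta_sum (hconn : G.Connected) (w : V) :
    ∑ v, delta G w v = 0 := by
  unfold delta
  rw [Finset.sum_sub_distrib, sub_eq_zero]
  have key : ∑ v : V, sphDeg G w v (G.dist w v + 1) = ∑ v : V, sphDeg G w v (G.dist w v - 1) := by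
    unfold sphDeg
    simp only [Finset.card_filter]
    rw [Finset.sum_comm (s := Finset.univ) (t := Finset.univ)
      (f := fun v u => if G.Adj v u ∧ G.dist w u = G.dist w v - 1 then 1 else 0)]
    refine Finset.sum_congr rfl fun a _ => Finset.sum_congr rfl fun b _ => ?_
    refine if_congr ?_ rfl rfl
    constructor
    · rintro ⟨h1, h2⟩
      exact ⟨h1.symm, by omega⟩
    · rintro ⟨h1, h2⟩
      refine ⟨h1.symm, ?_⟩
      by_cases hb : G.dist w b = 0
      · exfalso
        have hwb : w = b := hconn.dist_eq_zero_iff.mp hb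
        have ha0 : G.dist w a = 0 := by omega
        have hwa : w = a := hconn.dist_eq_zero_iff.mp ha0
        rw [← hwb, ← hwa] at h1
        exact G.loopless.irrefl w h1
      · omega
  exact_mod_cast key

end lemmas

theorem stmt [Fintype V] (G : SimpleGraph V) (hconn : G.Connected)
    (D L : ℕ) (hD : 0 < D) (hL : 0 < L) (hreg : G.IsRegularOfDegree D)
    (hdiam : G.diam = L) (hBM : BMSharp G D L)
    (x0 : V) (hpole : ∃ p, G.dist x0 p = L)
    (y : V) (k : ℕ) (hk : G.dist x0 y = k) :
    (sphDeg G x0 y (k + 1) : ℝ) - (sphDeg G x0 y (k - 1) : ℝ)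
      = D * (1 - 2 * k / L) := by
  obtain ⟨p, hp⟩ := hpole
  set g : V → V → ℝ := fun w v => D * (1 - 2 * (G.dist w v : ℝ) / L) - delta G w v with hg
  have hgnn : ∀ w v, 0 ≤ g w v := fun w v => by
    have := delta_le hconn hreg hD hL hBM w v; simp [hg]; linarith
  have hLpos : (0:ℝ) < L := by exact_mod_cast hL
  have hsum : ∑ v, g x0 v + ∑ v, g p v ≤ 0 := by
    have e1 : ∀ (w : V), ∑ v, g w v = ∑ v, (D * (1 - 2 * (G.dist w v : ℝ) / L)) := by
      intro w
      simp only [hg, Finset.sum_sub_distrib, delta_sum hconn w, sub_zero]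
    rw [e1 x0, e1 p, ← Finset.sum_add_distrib]
    have : ∀ v : V, D * (1 - 2 * (G.dist x0 v : ℝ) / L) + D * (1 - 2 * (G.dist p v : ℝ) / L) ≤ 0 := by
      intro v
      have htri : (L : ℝ) ≤ (G.dist x0 v : ℝ) + (G.dist p v : ℝ) := by
        have h1 : G.dist x0 p ≤ G.dist x0 v + G.dist v p := hconn.dist_triangle
        rw [hp, SimpleGraph.dist_comm (u := v) (v := p)] at h1
        exact_mod_cast h1
      have hDnn : (0:ℝ) ≤ D := by positivity
      have key : 2 * (D:ℝ) ≤ D * (2 * (G.dist x0 v : ℝ) / L) + D * (2 * (G.dist p v : ℝ) / L) := by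
        rw [← sub_nonneg]
        have hq : (D:ℝ) * (2 * (G.dist x0 v : ℝ) / L) + D * (2 * (G.dist p v : ℝ) / L) - 2 * D
            = (2 * D * (((G.dist x0 v : ℝ) + (G.dist p v : ℝ)) - L)) / L := by
          field_simp
        rw [hq]
        apply div_nonneg _ (le_of_lt hLpos)
        nlinarith
      linarith
    calc ∑ v, (D * (1 - 2 * (G.dist x0 v : ℝ) / L) + D * (1 - 2 * (G.dist p v : ℝ) / L))
        ≤ ∑ _v : V, (0:ℝ) := Finset.sum_le_sum (fun v _ => this v)
      _ = 0 := by simp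
  have hA : ∑ v, g x0 v = 0 := by
    have h1 : (0:ℝ) ≤ ∑ v, g x0 v := Finset.sum_nonneg fun v _ => hgnn x0 v
    have h2 : (0:ℝ) ≤ ∑ v, g p v := Finset.sum_nonneg fun v _ => hgnn p v
    linarith
  have hy : g x0 y = 0 := by
    have := (Finset.sum_eq_zero_iff_of_nonneg (fun v _ => hgnn x0 v)).mp hA y (Finset.mem_univ y)
    exact this
  have : delta G x0 y = D * (1 - 2 * (G.dist x0 y : ℝ) / L) := by
    simp [hg] at hy; linarith
  rw [hk] at this
  unfold delta at this
  rw [hk] at this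
  exact this

end BMS
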